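/- Let $[a,b] \subseteq \mathbb{R}$ be an interval, $y_1,\dots,y_N \in [a,b]$, and $p_1,\dots,p_N$ positive reals with $\sum_{n=1}^N p_n = 1$. If $f:[a,b]\to\mathbb{R}$ is convex on $[a,b]$, then $\sum_{n=1}^N p_n f(y_n) - f\left(\sum_{n=1}^N p_n y_n\right) \le f(a) + f(b) - 2 f\left(\frac{a+b}{2}\right)$. -/

import Mathlib

open Finset

theorem converse_jensen
    (a b : ℝ) (hab : a ≤ b) (N : ℕ)
    (y : Fin N → ℝ) (hy : ∀ n, y n ∈ Set.Icc a b)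
    (p : Fin N → ℝ) (hp : ∀ n, 0 < p n) (hsum : ∑ n, p n = 1)
    (f : ℝ → ℝ) (hf : ConvexOn ℝ (Set.Icc a b) f) :
    ∑ n, p n * f (y n) - f (∑ n, p n * y n)
      ≤ f a + f b - 2 * f ((a + b) / 2) := by
  rcases eq_or_lt_of_le hab with heq | hlt
  · subst heq
    have hya : ∀ n, y n = a := fun n => le_antisymm (hy n).2 (hy n).1
    have h1 : ∑ n, p n * f (y n) = f a := by
      simp_rw [fun n => hya n]
      rw [← Finset.sum_mul, hsum, one_mul]
    have h2 : ∑ n, p n * y n = a := by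
      simp_rw [fun n => hya n]
      rw [← Finset.sum_mul, hsum, one_mul]
    rw [h1, h2]
    have : (a + a) / 2 = a := by ring
    rw [this]; linarith
  · set t : Fin N → ℝ := fun n => (b - y n) / (b - a) with ht
    have hba : (0:ℝ) < b - a := by linarith
    have ht01 : ∀ n, 0 ≤ t n ∧ t n ≤ 1 := by
      intro n
      constructor
      · apply div_nonneg (by linarith [(hy n).2]) hba.le
      · rw [div_le_one hba]; linarith [(hy n).1]
    have hyn : ∀ n, y n = t n * a + (1 - t n) * b := by
      intro n
      simp only [ht]
      field_simp
      ring
    set T : ℝ := ∑ n, p n * t n with hT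
    have hT0 : 0 ≤ T := Finset.sum_nonneg fun n _ =>
      mul_nonneg (hp n).le (ht01 n).1
    have hT1 : T ≤ 1 := by
      rw [← hsum]
      apply Finset.sum_le_sum
      intro n _
      nlinarith [(hp n), (ht01 n).2]
    have hymean : ∑ n, p n * y n = T * a + (1 - T) * b := by
      simp_rw [fun n => hyn n]
      have : ∀ n, p n * (t n * a + (1 - t n) * b)
          = (p n * t n) * a + (p n - p n * t n) * b := by intro n; ring
      simp_rw [this]
      rw [Finset.sum_add_distrib, ← Finset.sum_mul, ← Finset.sum_mul,
        Finset.sum_sub_distrib, hsum]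
    have hsumf : ∑ n, p n * f (y n) ≤ T * f a + (1 - T) * f b := by
      have hstep : ∀ n, p n * f (y n) ≤ (p n * t n) * f a + (p n - p n * t n) * f b := by
        intro n
        have := hf.2 (Set.left_mem_Icc.2 hab) (Set.right_mem_Icc.2 hab)
          (ht01 n).1 (show (0:ℝ) ≤ 1 - t n by linarith [(ht01 n).2])
          (show t n + (1 - t n) = 1 by ring)
        simp only [smul_eq_mul] at this
        rw [← hyn n] at this
        nlinarith [(hp n).le, this]
      calc ∑ n, p n * f (y n) ≤ ∑ n, ((p n * t n) * f a + (p n - p n * t n) * f b) :=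
            Finset.sum_le_sum fun n _ => hstep n
        _ = T * f a + (1 - T) * f b := by
            rw [Finset.sum_add_distrib, ← Finset.sum_mul, ← Finset.sum_mul,
              Finset.sum_sub_distrib, hsum]
    set u : ℝ := T * a + (1 - T) * b with hu
    set z : ℝ := (1 - T) * a + T * b with hz
    have humem : u ∈ Set.Icc a b := by
      constructor <;> nlinarith [hT0, hT1]
    have hzmem : z ∈ Set.Icc a b := by
      constructor <;> nlinarith [hT0, hT1]
    have hmid : f ((a + b) / 2) ≤ (1/2) * f u + (1/2) * f z := by
      have := hf.2 humem hzmem (show (0:ℝ) ≤ 1/2 by norm_num) (show (0:ℝ) ≤ 1/2 by norm_num)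
        (show (1/2:ℝ) + 1/2 = 1 by norm_num)
      simp only [smul_eq_mul] at this
      have huz : (1/2 : ℝ) * u + (1/2) * z = (a + b) / 2 := by
        rw [hu, hz]; ring
      rwa [huz] at this
    have hzf : f z ≤ (1 - T) * f a + T * f b := by
      have := hf.2 (Set.left_mem_Icc.2 hab) (Set.right_mem_Icc.2 hab)
        (show (0:ℝ) ≤ 1 - T by linarith) hT0 (show (1 - T) + T = 1 by ring)
      simpa [smul_eq_mul, hz] using this
    rw [hymean]
    linarith [hsumf, hmid, hzf]
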